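/- If the circulant graph Cay(ℤ_n, S) admits pretty good state transfer between vertices u and v with u ≠ v, then n is even and v = u + n/2 in ℤ_n. -/

import Mathlib

open Matrix Complex Filter Topology

attribute [local instance] Matrix.linftyOpNormedRing Matrix.linftyOpNormedAlgebra

/-- Adjacency matrix of the circulant graph `Cay(ℤ_n, S)`. -/
noncomputable def circAdj (n : ℕ) [NeZero n] (S : Finset (ZMod n)) :
    Matrix (ZMod n) (ZMod n) ℂ :=
  Matrix.of fun a b => if a - b ∈ S then (1 : ℂ) else 0

/-- Transition matrix `H(t) = exp(-itA)`. -/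
noncomputable def transM {n : ℕ} [NeZero n] (A : Matrix (ZMod n) (ZMod n) ℂ) (t : ℝ) :
    Matrix (ZMod n) (ZMod n) ℂ :=
  NormedSpace.exp ((-(t : ℂ) * Complex.I) • A)

/-- The standard basis vector `e_u` of `ℂ^{ℤ_n}`. -/
def eVec {n : ℕ} [NeZero n] (u : ZMod n) : ZMod n → ℂ := Pi.single u 1

/-- If a circulant graph has pretty good state transfer between distinct
vertices `u` and `v`, then `n` is even and `v = u + n/2`. -/
theorem pgst_antipodal (n : ℕ) [NeZero n]
    (S : Finset (ZMod n)) (hS0 : (0 : ZMod n) ∉ S) (hSsym : ∀ s ∈ S, -s ∈ S)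
    (u v : ZMod n) (huv : u ≠ v)
    (hpgst : ∃ (t : ℕ → ℝ) (γ : ℂ), ‖γ‖ = 1 ∧
      Tendsto (fun m => transM (circAdj n S) (t m) *ᵥ eVec u) atTop
        (nhds (γ • eVec v))) :
    2 ∣ n ∧ v = u + ((n / 2 : ℕ) : ZMod n) := by
  obtain ⟨t, γ, hγ, htend⟩ := hpgst
  set A := circAdj n S with hA
  -- the involutive automorphism x ↦ u + u - x
  have hσinv : Function.Involutive (fun x : ZMod n => u + u - x) := fun x => by ring
  let σ : Equiv.Perm (ZMod n) := hσinv.toPerm _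
  have hσ : ∀ x, σ x = u + u - x := fun _ => rfl
  have hσsymm : ∀ x, σ.symm x = u + u - x := fun _ => rfl
  -- A is invariant under σ
  have hAσ : ∀ a b, A (σ a) (σ b) = A a b := by
    intro a b
    simp only [hσ, hA, circAdj, Matrix.of_apply]
    have h1 : (u + u - a) - (u + u - b) = -(a - b) := by ring
    rw [h1]
    congr 1
    simp only [eq_iff_iff]
    constructor
    · intro h
      have := hSsym _ h
      simpa using this
    · intro h
      exact hSsym _ h
  -- transition matrix is invariant under σ
  have key : ∀ (τ : ℝ) (x y : ZMod n), transM A τ (σ x) (σ y) = transM A τ x y := by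
    intro τ x y
    let φ : Matrix (ZMod n) (ZMod n) ℂ ≃ₐ[ℂ] Matrix (ZMod n) (ZMod n) ℂ :=
      Matrix.reindexAlgEquiv ℂ ℂ σ.symm
    have hφ : ∀ (M : Matrix (ZMod n) (ZMod n) ℂ) (a b : ZMod n), φ M a b = M (σ a) (σ b) := by
      intro M a b
      simp [φ, Matrix.reindex_apply, Matrix.submatrix_apply]
    have hcont : Continuous φ := by
      have : Continuous (φ : Matrix (ZMod n) (ZMod n) ℂ →ₗ[ℂ] Matrix (ZMod n) (ZMod n) ℂ) :=
        LinearMap.continuous_of_finiteDimensional _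
      exact this
    have hφA : φ A = A := by
      ext a b
      rw [hφ]
      exact hAσ a b
    have hφexp : φ (transM A τ) = transM A τ := by
      erw [transM, NormedSpace.map_exp (φ : Matrix (ZMod n) (ZMod n) ℂ ≃ₐ[ℂ]
        Matrix (ZMod n) (ZMod n) ℂ) hcont, _root_.map_smul, hφA]
      rfl
    calc transM A τ (σ x) (σ y) = φ (transM A τ) x y := (hφ _ x y).symm
      _ = transM A τ x y := by rw [hφexp]
  -- the coordinates at v and σ v of the evolving state agree
  have hcoord : ∀ m : ℕ, (transM A (t m) *ᵥ eVec u) (σ v) = (transM A (t m) *ᵥ eVec u) v := by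
    intro m
    have hu : σ u = u := by rw [hσ]; ring
    simp only [eVec, Matrix.mulVec_single, mul_one, MulOpposite.op_one, one_smul, Matrix.col_apply]
    calc transM A (t m) (σ v) u = transM A (t m) (σ v) (σ u) := by rw [hu]
      _ = transM A (t m) v u := key _ v u
  -- take limits at the two coordinates
  have h1 : Tendsto (fun m => (transM A (t m) *ᵥ eVec u) v) atTop
      (nhds ((γ • eVec v) v)) := ((continuous_apply v).tendsto _).comp htend
  have h2 : Tendsto (fun m => (transM A (t m) *ᵥ eVec u) (σ v)) atTop
      (nhds ((γ • eVec v) (σ v))) := ((continuous_apply (σ v)).tendsto _).comp htend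
  have h2' : Tendsto (fun m => (transM A (t m) *ᵥ eVec u) v) atTop
      (nhds ((γ • eVec v) (σ v))) := by
    refine h2.congr fun m => hcoord m
  have heq : (γ • eVec v) (σ v) = (γ • eVec v) v := tendsto_nhds_unique h2' h1
  have hγ0 : γ ≠ 0 := by
    intro h
    rw [h] at hγ
    simp at hγ
  have hfix : σ v = v := by
    by_contra h
    rw [Pi.smul_apply, Pi.smul_apply, eVec, Pi.single_eq_same,
      Pi.single_eq_of_ne h] at heq
    rw [smul_zero, smul_eq_mul, mul_one] at heq
    exact hγ0 heq.symm
  -- arithmetic: u + u = v + v with u ≠ v forces n even and v = u + n/2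
  have huv2 : v + v = u + u := by
    have := hfix
    rw [hσ] at this
    linear_combination -this
  set d : ZMod n := u - v with hd
  have hd0 : d ≠ 0 := sub_ne_zero.mpr huv
  have hdd : d + d = 0 := by rw [hd]; linear_combination -huv2
  have hvalpos : 0 < d.val := by
    rcases Nat.eq_zero_or_pos d.val with h | h
    · exact absurd ((ZMod.val_eq_zero d).mp h) hd0
    · exact h
  have hvallt : d.val < n := ZMod.val_lt d
  have hdvd : n ∣ 2 * d.val := by
    have : ((2 * d.val : ℕ) : ZMod n) = 0 := by
      push_cast
      rw [ZMod.natCast_val, ZMod.cast_id]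
      linear_combination hdd
    exact (ZMod.natCast_eq_zero_iff _ _).mp this
  have h2d : 2 * d.val = n := by
    obtain ⟨k, hk⟩ := hdvd
    have hk0 : k ≠ 0 := by
      rintro rfl
      omega
    have hk2 : k < 2 := by
      by_contra h
      push_neg at h
      have : 2 * n ≤ n * k := by
        calc 2 * n = n * 2 := by ring
          _ ≤ n * k := Nat.mul_le_mul_left n h
      omega
    interval_cases k <;> omega
  refine ⟨⟨d.val, h2d.symm⟩, ?_⟩
  have hn2 : n / 2 = d.val := by omega
  rw [hn2, ZMod.natCast_val, ZMod.cast_id]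
  have hnegd : -d = d := neg_eq_of_add_eq_zero_right hdd
  rw [hd] at hnegd ⊢
  linear_combination hnegd
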